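/- Let ε ∈ [0,1) and let A_ε be the qubit amplitude damping channel A_ε(ρ) = A₀ ρ A₀† + A₁ ρ A₁† with A₀ = |0⟩⟨0| + √(1−ε)|1⟩⟨1| and A₁ = √ε |0⟩⟨1|. Then A_ε is invertible as a linear map on M₂(ℂ), its inverse A_ε⁻¹ is HPTP, and ν(A_ε⁻¹) = log₂((1+ε)/(1−ε)); equivalently 2^{ν(A_ε⁻¹)} = (1+ε)/(1−ε). -/

import Mathlib

open scoped Kronecker ComplexOrder
open Matrix

noncomputable section

/-- `id_k ⊗ N` applied blockwise. -/
def idTensor {n m : Type*} (k : Type*)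
    (N : Matrix n n ℂ → Matrix m m ℂ)
    (M : Matrix (k × n) (k × n) ℂ) : Matrix (k × m) (k × m) ℂ :=
  Matrix.of fun p q => N (Matrix.of fun a b => M (p.1, a) (q.1, b)) p.2 q.2

/-- Trace-preserving. -/
def IsTP {n m : Type*} [Fintype n] [Fintype m]
    (N : Matrix n n ℂ → Matrix m m ℂ) : Prop :=
  ∀ X, (N X).trace = X.trace

/-- Hermitian-preserving. -/
def IsHP {n m : Type*} (N : Matrix n n ℂ → Matrix m m ℂ) : Prop :=
  ∀ X, X.IsHermitian → (N X).IsHermitian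

/-- Completely positive: for every `k`, `id_k ⊗ N` preserves positive semidefiniteness. -/
def IsCP {n m : Type*} [Fintype n] [Fintype m]
    (N : Matrix n n ℂ → Matrix m m ℂ) : Prop :=
  ∀ (k : ℕ) (M : Matrix (Fin k × n) (Fin k × n) ℂ),
    M.PosSemidef → (idTensor (Fin k) N M).PosSemidef

/-- Completely positive and trace-preserving (quantum channel). -/
def IsCPTP {n m : Type*} [Fintype n] [Fintype m]
    (N : Matrix n n ℂ → Matrix m m ℂ) : Prop :=
  IsLinearMap ℂ N ∧ IsCP N ∧ IsTP N

/-- Completely positive and trace non-increasing. -/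
def IsCPTN {n m : Type*} [Fintype n] [Fintype m]
    (N : Matrix n n ℂ → Matrix m m ℂ) : Prop :=
  IsLinearMap ℂ N ∧ IsCP N ∧ ∀ X : Matrix n n ℂ, X.PosSemidef → (N X).trace ≤ X.trace

/-- Costs of finite quasiprobability decompositions of `N` into CPTP maps. -/
def decompCosts {n m : Type*} [Fintype n] [Fintype m]
    (N : Matrix n n ℂ → Matrix m m ℂ) : Set ℝ :=
  { c | ∃ (s : ℕ) (η : Fin s → ℝ) (O : Fin s → (Matrix n n ℂ → Matrix m m ℂ)),
      (∀ i, IsCPTP (O i)) ∧ (∀ X, N X = ∑ i, (η i : ℂ) • O i X) ∧ c = ∑ i, |η i| }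

/-- The physical implementability `ν(N)`. -/
noncomputable def nu {n m : Type*} [Fintype n] [Fintype m]
    (N : Matrix n n ℂ → Matrix m m ℂ) : ℝ :=
  Real.logb 2 (sInf (decompCosts N))

/-- The Choi matrix of a linear map. -/
def choiMatrix {n m : Type*} [DecidableEq n]
    (N : Matrix n n ℂ → Matrix m m ℂ) : Matrix (n × m) (n × m) ℂ :=
  Matrix.of fun p q => N (Matrix.single p.1 q.1 1) p.2 q.2

/-- Partial trace over the second tensor factor. -/
def ptraceB {n m : Type*} [Fintype m] (J : Matrix (n × m) (n × m) ℂ) :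
    Matrix n n ℂ :=
  Matrix.of fun i j => ∑ a, J (i, a) (j, a)

/-- The trace norm of a matrix. -/
noncomputable def traceNorm {k : Type*} [Fintype k] [DecidableEq k]
    (X : Matrix k k ℂ) : ℝ :=
  (((Matrix.posSemidef_conjTranspose_mul_self X).1.eigenvectorUnitary.1 *
      Matrix.diagonal (((↑) : ℝ → ℂ) ∘ (√·) ∘ (Matrix.posSemidef_conjTranspose_mul_self X).1.eigenvalues) *
      (star (Matrix.posSemidef_conjTranspose_mul_self X).1.eigenvectorUnitary :
        Matrix k k ℂ)).trace).re

/-- Tensor product of two maps. -/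
def tensorMap {n₁ n₂ m₂ : Type*} [Fintype n₁] [DecidableEq n₁]
    (M : Matrix n₁ n₁ ℂ → Matrix n₁ n₁ ℂ) (N : Matrix n₂ n₂ ℂ → Matrix m₂ m₂ ℂ)
    (X : Matrix (n₁ × n₂) (n₁ × n₂) ℂ) : Matrix (n₁ × m₂) (n₁ × m₂) ℂ :=
  ∑ i : n₁, ∑ j : n₁,
    (M (Matrix.single i j 1)) ⊗ₖ (N (Matrix.of fun a b => X (i, a) (j, b)))


/-- The qubit amplitude damping channel. -/
def adChannel (ε : ℝ) (X : Matrix (Fin 2) (Fin 2) ℂ) : Matrix (Fin 2) (Fin 2) ℂ :=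
  !![1, 0; 0, (Real.sqrt (1 - ε) : ℂ)] * X * !![1, 0; 0, (Real.sqrt (1 - ε) : ℂ)]ᴴ +
  !![0, (Real.sqrt ε : ℂ); 0, 0] * X * !![0, (Real.sqrt ε : ℂ); 0, 0]ᴴ

/-! ### Auxiliary lemmas -/

lemma AD.sum_psd {r m : Type*} [Fintype r] [Fintype m] (A : r → Matrix m m ℂ)
    (h : ∀ i, (A i).PosSemidef) : (∑ i, A i).PosSemidef :=
  Finset.sum_induction A _ (fun _ _ ha hb => ha.add hb) Matrix.PosSemidef.zero
    (fun i _ => h i)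

lemma AD.kraus_isCP {n m : Type*} [Fintype n] [Fintype m] [DecidableEq n] [DecidableEq m]
    {r : ℕ} (K : Fin r → Matrix m n ℂ) :
    IsCP (fun X : Matrix n n ℂ => (∑ i, K i * X * (K i)ᴴ : Matrix m m ℂ)) := by
  intro k M hM
  have key : idTensor (Fin k) (fun X : Matrix n n ℂ => (∑ i, K i * X * (K i)ᴴ : Matrix m m ℂ)) M
      = ∑ i, (Matrix.of fun (p : Fin k × m) (q : Fin k × n) =>
          if p.1 = q.1 then K i p.2 q.2 else 0) * M *
          (Matrix.of fun (p : Fin k × m) (q : Fin k × n) =>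
          if p.1 = q.1 then K i p.2 q.2 else 0)ᴴ := by
    ext ⟨p₁, p₂⟩ ⟨q₁, q₂⟩
    simp only [idTensor, Matrix.of_apply, Matrix.sum_apply, Matrix.mul_apply,
      Matrix.conjTranspose_apply, Fintype.sum_prod_type, Finset.sum_mul, Finset.mul_sum,
      ite_mul, mul_ite, zero_mul, mul_zero, apply_ite (star : ℂ → ℂ), star_zero,
      Finset.sum_ite_eq, Finset.sum_ite_eq', Finset.mem_univ, if_true]
    refine Finset.sum_congr rfl fun i _ => ?_
    rw [Finset.sum_eq_single q₁ (fun b _ hb => by simp [if_neg (Ne.symm hb)]) (by simp)]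
    refine Finset.sum_congr rfl fun x _ => ?_
    rw [if_pos rfl,
      Finset.sum_eq_single p₁ (fun b _ hb => by simp [if_neg (Ne.symm hb)]) (by simp)]
    simp
  rw [key]
  exact AD.sum_psd _ fun i => hM.mul_mul_conjTranspose_same _

lemma AD.cp_posSemidef {n m : Type*} [Fintype n] [Fintype m]
    {N : Matrix n n ℂ → Matrix m m ℂ} (h : IsCP N) {X : Matrix n n ℂ}
    (hX : X.PosSemidef) : (N X).PosSemidef := by
  have h2 := h 1 (X.submatrix Prod.snd Prod.snd) (hX.submatrix _)
  have h3 := h2.submatrix (fun b : m => ((0 : Fin 1), b))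
  convert h3 using 1
  ext i j
  simp only [idTensor, Matrix.submatrix_apply, Matrix.of_apply]
  rfl

/-- dephasing channel -/
def AD.phaseDamp (s : ℝ) (X : Matrix (Fin 2) (Fin 2) ℂ) : Matrix (Fin 2) (Fin 2) ℂ :=
  !![X 0 0, (s : ℂ) * X 0 1; (s : ℂ) * X 1 0, X 1 1]

/-- reset-to-`|0⟩` channel -/
def AD.resetZero (X : Matrix (Fin 2) (Fin 2) ℂ) : Matrix (Fin 2) (Fin 2) ℂ :=
  !![X 0 0 + X 1 1, 0; 0, 0]

lemma AD.phaseDamp_isCPTP {s : ℝ} (hs0 : 0 ≤ s) (hs1 : s ≤ 1) : IsCPTP (AD.phaseDamp s) := by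
  have h1 : (0:ℝ) ≤ (1+s)/2 := by linarith
  have h2 : (0:ℝ) ≤ (1-s)/2 := by linarith
  set a : ℝ := Real.sqrt ((1+s)/2) with ha_def
  set b : ℝ := Real.sqrt ((1-s)/2) with hb_def
  have ha : a * a = (1+s)/2 := Real.mul_self_sqrt h1
  have hb : b * b = (1-s)/2 := Real.mul_self_sqrt h2
  have haC : (a:ℂ) * a = (1 + (s:ℂ))/2 := by
    rw [← Complex.ofReal_mul, ha]; push_cast; ring
  have hbC : (b:ℂ) * b = (1 - (s:ℂ))/2 := by
    rw [← Complex.ofReal_mul, hb]; push_cast; ring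
  have hkey : AD.phaseDamp s = fun X => ∑ i : Fin 2,
      (![!![(a:ℂ), 0; 0, (a:ℂ)], !![(b:ℂ), 0; 0, -(b:ℂ)]] i) * X *
      (![!![(a:ℂ), 0; 0, (a:ℂ)], !![(b:ℂ), 0; 0, -(b:ℂ)]] i)ᴴ := by
    funext X
    ext i j
    fin_cases i <;> fin_cases j <;>
      simp [AD.phaseDamp, Fin.sum_univ_two, Matrix.mul_apply, Matrix.vecMul, dotProduct,
        Matrix.conjTranspose_apply, Complex.conj_ofReal]
    · linear_combination (-X 0 0) * (haC + hbC)
    · linear_combination (-X 0 1) * (haC - hbC)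
    · linear_combination (-X 1 0) * (haC - hbC)
    · linear_combination (-X 1 1) * (haC + hbC)
  refine ⟨?_, ?_, ?_⟩
  · constructor
    · intro X Y; ext i j; fin_cases i <;> fin_cases j <;> simp [AD.phaseDamp] <;> ring
    · intro c X; ext i j; fin_cases i <;> fin_cases j <;> simp [AD.phaseDamp] <;> ring
  · rw [hkey]; exact AD.kraus_isCP _
  · intro X; simp [AD.phaseDamp, Matrix.trace_fin_two]

lemma AD.resetZero_isCPTP : IsCPTP AD.resetZero := by
  have hkey : AD.resetZero = fun X => ∑ i : Fin 2,
      (![!![(1:ℂ), 0; 0, 0], !![(0:ℂ), 1; 0, 0]] i) * X *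
      (![!![(1:ℂ), 0; 0, 0], !![(0:ℂ), 1; 0, 0]] i)ᴴ := by
    funext X
    ext i j
    fin_cases i <;> fin_cases j <;>
      simp [AD.resetZero, Fin.sum_univ_two, Matrix.mul_apply, Matrix.vecMul, dotProduct,
        Matrix.conjTranspose_apply]
  refine ⟨?_, ?_, ?_⟩
  · constructor
    · intro X Y; ext i j; fin_cases i <;> fin_cases j <;> simp [AD.resetZero] <;> ring
    · intro c X; ext i j; fin_cases i <;> fin_cases j <;> simp [AD.resetZero] <;> ring
  · rw [hkey]; exact AD.kraus_isCP _
  · intro X; simp [AD.resetZero, Matrix.trace_fin_two]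

lemma AD.psd_diag_re_nonneg {m : Type*} [Fintype m] [DecidableEq m]
    {M : Matrix m m ℂ} (hM : M.PosSemidef) (i : m) : 0 ≤ (M i i).re := by
  have h := hM.dotProduct_mulVec_nonneg (Pi.single i 1)
  have h2 : (0:ℂ) ≤ M i i := by
    simpa [Matrix.mulVec, dotProduct, Pi.single_apply] using h
  exact (Complex.le_def.mp h2).1

/-- the amplitude damping channel `A_ε` (with `0 ≤ ε < 1`) is invertible,
its inverse is HPTP, and `ν(A_ε⁻¹) = log₂((1+ε)/(1-ε))`. -/
theorem nu_amplitude_damping_inverse (ε : ℝ) (hε0 : 0 ≤ ε) (hε1 : ε < 1) :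
    ∃ Ainv : Matrix (Fin 2) (Fin 2) ℂ → Matrix (Fin 2) (Fin 2) ℂ,
      IsLinearMap ℂ Ainv ∧ (∀ X, Ainv (adChannel ε X) = X) ∧
      IsHP Ainv ∧ IsTP Ainv ∧
      nu Ainv = Real.logb 2 ((1 + ε) / (1 - ε)) := by
  have h1ε : (0:ℝ) < 1 - ε := by linarith
  have hs0 : 0 < Real.sqrt (1 - ε) := Real.sqrt_pos.mpr h1ε
  have hs2 : Real.sqrt (1 - ε) * Real.sqrt (1 - ε) = 1 - ε := Real.mul_self_sqrt h1ε.le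
  have hs1 : Real.sqrt (1 - ε) ≤ 1 := by nlinarith
  have hsC : ((Real.sqrt (1 - ε) : ℝ):ℂ) * (Real.sqrt (1 - ε) : ℝ) = 1 - (ε:ℂ) := by
    rw [← Complex.ofReal_mul, hs2]; push_cast; ring
  have heC : ((Real.sqrt ε : ℝ):ℂ) * (Real.sqrt ε : ℝ) = (ε:ℂ) := by
    rw [← Complex.ofReal_mul, Real.mul_self_sqrt hε0]
  have hsne : ((Real.sqrt (1 - ε) : ℝ):ℂ) ≠ 0 := by
    simpa using Complex.ofReal_ne_zero.mpr hs0.ne'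
  have h1εC : (1 - (ε:ℂ)) ≠ 0 := by
    rw [← hsC]; exact mul_ne_zero hsne hsne
  have hinv : (1 - (ε:ℂ))⁻¹ * (1 - (ε:ℂ)) = 1 := inv_mul_cancel₀ h1εC
  have hinvs : ((Real.sqrt (1 - ε) : ℝ):ℂ)⁻¹ * ((Real.sqrt (1 - ε) : ℝ):ℂ) = 1 :=
    inv_mul_cancel₀ hsne
  set Ainv : Matrix (Fin 2) (Fin 2) ℂ → Matrix (Fin 2) (Fin 2) ℂ :=
    fun X => !![X 0 0 - (ε:ℂ)/(1-ε) * X 1 1, ((Real.sqrt (1 - ε) : ℝ):ℂ)⁻¹ * X 0 1;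
                ((Real.sqrt (1 - ε) : ℝ):ℂ)⁻¹ * X 1 0, (1-(ε:ℂ))⁻¹ * X 1 1] with hAinv_def
  have hadEq : ∀ X, adChannel ε X =
      !![X 0 0 + (ε:ℂ) * X 1 1, ((Real.sqrt (1 - ε) : ℝ):ℂ) * X 0 1;
         ((Real.sqrt (1 - ε) : ℝ):ℂ) * X 1 0, (1-(ε:ℂ)) * X 1 1] := by
    intro X
    ext i j
    fin_cases i <;> fin_cases j <;>
      simp [adChannel, Matrix.mul_apply, Fin.sum_univ_two, Matrix.vecMul, dotProduct,
        Matrix.conjTranspose_apply, Complex.conj_ofReal]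
    all_goals first
      | ring1
      | linear_combination X 1 1 * heC
      | linear_combination (-X 1 1) * heC
      | linear_combination X 1 1 * hsC
      | linear_combination (-X 1 1) * hsC
  refine ⟨Ainv, ?_, ?_, ?_, ?_, ?_⟩
  · constructor
    · intro X Y; ext i j; fin_cases i <;> fin_cases j <;> simp [hAinv_def] <;> ring
    · intro c X; ext i j; fin_cases i <;> fin_cases j <;> simp [hAinv_def] <;> ring
  · intro X
    rw [hadEq X]
    ext i j
    fin_cases i <;> fin_cases j <;> simp [hAinv_def]
    all_goals first
      | ring1
      | linear_combination (-(ε:ℂ) * X 1 1) * hinv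
      | linear_combination ((ε:ℂ) * X 1 1) * hinv
      | linear_combination X 0 1 * hinvs
      | linear_combination X 1 0 * hinvs
      | linear_combination X 1 1 * hinv
  · intro X hX
    have happ : ∀ i j, (star (X j i)) = X i j := fun i j => congrFun (congrFun hX i) j
    rw [Matrix.IsHermitian]
    ext i j
    fin_cases i <;> fin_cases j <;>
      simp [hAinv_def, Matrix.conjTranspose_apply, star_sub, star_mul', star_inv₀,
        star_div₀, Complex.star_def, Complex.conj_ofReal, happ] <;> ring
  · intro X
    simp [hAinv_def, Matrix.trace_fin_two]
    field_simp
    ring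
  · -- the value of nu
    have hdecomp : ∀ X, Ainv X =
        (((1-ε)⁻¹ : ℝ) : ℂ) • AD.phaseDamp (Real.sqrt (1 - ε)) X
        + ((-(ε/(1-ε)) : ℝ) : ℂ) • AD.resetZero X := by
      intro X
      ext i j
      fin_cases i <;> fin_cases j <;>
        simp [hAinv_def, AD.phaseDamp, AD.resetZero, Complex.ofReal_inv] <;>
        push_cast <;> field_simp
      all_goals first
        | ring1
        | linear_combination (-X 0 1) * hsC
        | linear_combination X 0 1 * hsC
        | linear_combination (-X 1 0) * hsC
        | linear_combination X 1 0 * hsC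
    have hmem : (1 + ε) / (1 - ε) ∈ decompCosts Ainv := by
      refine ⟨2, ![(1-ε)⁻¹, -(ε/(1-ε))],
        ![AD.phaseDamp (Real.sqrt (1 - ε)), AD.resetZero], ?_, ?_, ?_⟩
      · intro i
        fin_cases i
        · exact AD.phaseDamp_isCPTP hs0.le hs1
        · exact AD.resetZero_isCPTP
      · intro X
        rw [Fin.sum_univ_two]
        simpa using hdecomp X
      · rw [Fin.sum_univ_two]
        simp only [Matrix.cons_val_zero, Matrix.cons_val_one, Matrix.head_cons]
        rw [abs_of_nonneg (by positivity), abs_neg, abs_of_nonneg (by positivity)]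
        field_simp <;> ring
    have hlb : ∀ c ∈ decompCosts Ainv, (1 + ε) / (1 - ε) ≤ c := by
      rintro c ⟨r, η, O, hO, hdec, rfl⟩
      have hE11psd : (!![0, 0; 0, (1:ℂ)] : Matrix (Fin 2) (Fin 2) ℂ).PosSemidef := by
        rw [Matrix.posSemidef_iff_dotProduct_mulVec]
        constructor
        · ext i j; fin_cases i <;> fin_cases j <;> simp
        · intro x
          have : (star x) ⬝ᵥ ((!![0, 0; 0, (1:ℂ)]) *ᵥ x) = star (x 1) * x 1 := by
            simp [Matrix.mulVec, dotProduct, Fin.sum_univ_two]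
          rw [this]
          exact star_mul_self_nonneg _
      have hD : ∀ i, (O i !![0, 0; 0, (1:ℂ)]).PosSemidef :=
        fun i => AD.cp_posSemidef (hO i).2.1 hE11psd
      have hDtr : ∀ i, (O i !![0, 0; 0, (1:ℂ)]).trace = 1 := by
        intro i
        rw [(hO i).2.2]
        simp [Matrix.trace_fin_two]
      have habs : ∀ i, |(O i !![0, 0; 0, (1:ℂ)] 1 1).re
          - (O i !![0, 0; 0, (1:ℂ)] 0 0).re| ≤ 1 := by
        intro i
        have h00 := AD.psd_diag_re_nonneg (hD i) 0
        have h11 := AD.psd_diag_re_nonneg (hD i) 1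
        have hsum : (O i !![0, 0; 0, (1:ℂ)] 0 0).re
            + (O i !![0, 0; 0, (1:ℂ)] 1 1).re = 1 := by
          have := congrArg Complex.re (hDtr i)
          simpa [Matrix.trace_fin_two] using this
        rw [abs_le]; constructor <;> linarith
      have hkey := hdec !![0, 0; 0, (1:ℂ)]
      have hC00 : (Ainv !![0, 0; 0, (1:ℂ)]) 0 0 = ((-(ε/(1-ε)) : ℝ) : ℂ) := by
        simp [hAinv_def] <;> push_cast <;> ring
      have hC11 : (Ainv !![0, 0; 0, (1:ℂ)]) 1 1 = (((1-ε)⁻¹ : ℝ) : ℂ) := by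
        simp [hAinv_def] <;> push_cast <;> ring
      have h00 : (-(ε/(1-ε)) : ℝ) = ∑ i, η i * (O i !![0, 0; 0, (1:ℂ)] 0 0).re := by
        have h := congrArg (fun M => (M 0 0).re) hkey
        simp only [hC00, Complex.ofReal_re, Matrix.sum_apply, Matrix.smul_apply,
          smul_eq_mul, Complex.re_sum, Complex.re_ofReal_mul] at h
        exact h
      have h11 : ((1-ε)⁻¹ : ℝ) = ∑ i, η i * (O i !![0, 0; 0, (1:ℂ)] 1 1).re := by
        have h := congrArg (fun M => (M 1 1).re) hkey
        simp only [hC11, Complex.ofReal_re, Matrix.sum_apply, Matrix.smul_apply,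
          smul_eq_mul, Complex.re_sum, Complex.re_ofReal_mul] at h
        exact h
      have hval : (1 + ε) / (1 - ε)
          = ∑ i, η i * ((O i !![0, 0; 0, (1:ℂ)] 1 1).re
              - (O i !![0, 0; 0, (1:ℂ)] 0 0).re) := by
        have : (1 + ε) / (1 - ε) = ((1-ε)⁻¹ : ℝ) - (-(ε/(1-ε)) : ℝ) := by
          field_simp <;> ring
        rw [this, h00, h11, ← Finset.sum_sub_distrib]
        exact Finset.sum_congr rfl fun i _ => by ring
      calc (1 + ε) / (1 - ε)
          = ∑ i, η i * ((O i !![0, 0; 0, (1:ℂ)] 1 1).re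
              - (O i !![0, 0; 0, (1:ℂ)] 0 0).re) := hval
        _ ≤ ∑ i, |η i * ((O i !![0, 0; 0, (1:ℂ)] 1 1).re
              - (O i !![0, 0; 0, (1:ℂ)] 0 0).re)| :=
            Finset.sum_le_sum fun i _ => le_abs_self _
        _ ≤ ∑ i, |η i| := by
            refine Finset.sum_le_sum fun i _ => ?_
            rw [abs_mul]
            calc |η i| * |(O i !![0, 0; 0, (1:ℂ)] 1 1).re
                - (O i !![0, 0; 0, (1:ℂ)] 0 0).re| ≤ |η i| * 1 :=
                  mul_le_mul_of_nonneg_left (habs i) (abs_nonneg _)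
              _ = |η i| := mul_one _
    have hInf : sInf (decompCosts Ainv) = (1 + ε) / (1 - ε) :=
      le_antisymm (csInf_le ⟨(1 + ε) / (1 - ε), hlb⟩ hmem) (le_csInf ⟨_, hmem⟩ hlb)
    rw [nu, hInf]

end
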